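/- Let K ≤ F_d with rad(K) ≥ n, let μ be a symmetric, adapted probability measure on F_d with finite first moment, and let Z_t = K X_t where (X_t) is the μ-random walk. Then for every r ≤ n and every integer m ≥ 0: Σ_{t≥m} P[pref_r(Z_t) ≠ pref_r(Z_{t+1})] ≤ |B_r| · Σ_{u∈F_d} μ(u)·|u|· g_K^{m+}(K, B(K, r+|u|)), where B_r is the ball of radius r in F_d and B(K,ρ) is the ball of radius ρ about the root in Sch(K). -/

import Mathlib

open Filter MeasureTheory
open scoped ENNReal Topology

noncomputable section

namespace Paper

variable {G : Type*} [Group G]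

/-- A probability measure on a group is symmetric if `μ(x⁻¹) = μ(x)`. -/
def IsSymmetric (μ : PMF G) : Prop := ∀ x : G, μ x⁻¹ = μ x

/-- A probability measure on a group is adapted if its support generates the group. -/
def IsAdapted (μ : PMF G) : Prop := Subgroup.closure μ.support = ⊤

/-- Convolution of two probability measures on a group. -/
def conv (μ ν : PMF G) : PMF G := μ.bind fun x => ν.map fun y => x * y

/-- `iterConv μ t` is the `t`-fold convolution `μ^{*t}`, with `μ^{*0} = δ_1`. -/
def iterConv (μ : PMF G) : ℕ → PMF G
  | 0 => PMF.pure 1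
  | t + 1 => conv (iterConv μ t) μ

/-- Shannon entropy `H(p) = -∑ p(a) log p(a)`. -/
def pmfEntropy {α : Type*} (p : PMF α) : ℝ := ∑' a, Real.negMulLog ((p a).toReal)

/-- A probability measure has finite (Shannon) entropy when the defining series
converges. -/
def FiniteEntropy {α : Type*} (p : PMF α) : Prop :=
  Summable fun a => Real.negMulLog ((p a).toReal)

/-- The random walk entropy `h(G,μ) = lim_t H(μ^{*t})/t`. -/
def rwEntropy (μ : PMF G) : ℝ :=
  limUnder atTop fun t : ℕ => pmfEntropy (iterConv μ t) / t

/-- Word length of `x` with respect to a generating set `S`. -/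
def wordLength (S : Set G) (x : G) : ℕ :=
  sInf {n | ∃ l : List G, l.length = n ∧ (∀ a ∈ l, a ∈ S) ∧ l.prod = x}

/-- `μ` has finite `k`-th moment w.r.t. the generating set `S`. -/
def FiniteMoment (S : Set G) (μ : PMF G) (k : ℕ) : Prop :=
  Summable fun x : G => (μ x).toReal * (wordLength S x : ℝ) ^ k

/-- The space `K\G` of right cosets `Kg`. -/
abbrev RightCoset (K : Subgroup G) := Quotient (QuotientGroup.rightRel K)

/-- The right coset `Kg`. -/
def rcMk (K : Subgroup G) (g : G) : RightCoset K :=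
  Quotient.mk (QuotientGroup.rightRel K) g

/-- Shannon entropy of the pushforward of `p` under `x ↦ Kx`. -/
def cosetEntropy (K : Subgroup G) (p : PMF G) : ℝ := pmfEntropy (p.map (rcMk K))

/-- The random walk entropy `h(G/N, μ̄)` of the quotient walk,
expressed as `lim_t H(N X_t)/t`. -/
def quotEntropy (μ : PMF G) (N : Subgroup G) : ℝ :=
  limUnder atTop fun t : ℕ => cosetEntropy N (iterConv μ t) / t

/-- Right multiplication by `g` on the space of right cosets: `Kx ↦ Kxg`. -/
def cosetMul (K : Subgroup G) (α : RightCoset K) (g : G) : RightCoset K :=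
  Quotient.liftOn α (fun x => rcMk K (x * g)) (by
    intro a b h
    have h' : b * a⁻¹ ∈ K := QuotientGroup.rightRel_apply.mp h
    apply Quotient.sound
    show QuotientGroup.rightRel K (a * g) (b * g)
    rw [QuotientGroup.rightRel_apply]
    have e : b * g * (a * g)⁻¹ = b * a⁻¹ := by group
    rw [e]; exact h')

/-- The graph distance in the Schreier graph of `K` (w.r.t. the generating set `S`)
from the coset `α` to the root coset `K`. -/
def cosetDist (S : Set G) (K : Subgroup G) (α : RightCoset K) : ℕ :=
  sInf {n | ∃ l : List G, l.length = n ∧ (∀ a ∈ l, a ∈ S) ∧ rcMk K l.prod = α}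

/-- The ball of radius `ρ` about the root in the Schreier graph of `K`. -/
def schreierBall (S : Set G) (K : Subgroup G) (ρ : ℕ) : Set (RightCoset K) :=
  {β | cosetDist S K β ≤ ρ}

open scoped Classical in
/-- The Green function `g_K^{m+}(α, B) = ∑_{t ≥ m} P[α X_t ∈ B]`. -/
def green (μ : PMF G) (K : Subgroup G) (m : ℕ) (α : RightCoset K)
    (B : Set (RightCoset K)) : ℝ≥0∞ :=
  ∑' (t : ℕ) (x : G), if cosetMul K α x ∈ B then iterConv μ (m + t) x else 0

/-- A subgroup `K` is `μ`-transient if the expected number of returns of the induced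
walk on `K\G` to the root is finite, i.e. `∑_t μ^{*t}(K) < ∞`. -/
def IsTransient (μ : PMF G) (K : Subgroup G) : Prop :=
  (∑' (t : ℕ) (x : ↥K), iterConv μ t ↑x) < ⊤

/-- The standard symmetric free generating set of the free group `F_d`. -/
def genSet (d : ℕ) : Set (FreeGroup (Fin d)) :=
  {x | ∃ i : Fin d, x = FreeGroup.of i ∨ x = (FreeGroup.of i)⁻¹}

/-- Word length in the free group. -/
def flen {d : ℕ} (x : FreeGroup (Fin d)) : ℕ := wordLength (genSet d) x

/-- `rad(g)`: the largest `k` such that the reduced word `s_1 ⋯ s_n` of `g` satisfies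
`s_1 ⋯ s_k = (s_{n-k+1} ⋯ s_n)⁻¹`. -/
def freeRad {d : ℕ} (g : FreeGroup (Fin d)) : ℕ :=
  sSup {k : ℕ | k ≤ g.toWord.length ∧
    g.toWord.take k = FreeGroup.invRev (g.toWord.drop (g.toWord.length - k))}

/-- `rad(K) ≥ r`, i.e. every nontrivial element of `K` has `rad` at least `r`. -/
def RadGE {d : ℕ} (K : Subgroup (FreeGroup (Fin d))) (r : ℕ) : Prop :=
  ∀ g ∈ K, g ≠ 1 → r ≤ freeRad g

/-- `pref_r(Kg)`: the `r`-prefix of a vertex of the Schreier graph of `K ≤ F_d`.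
If `|Kg| ≤ r` it is the unique `f` with `|f| = |Kg|` and `Kf = Kg`; if `|Kg| > r` it is
the unique `f` with `|f| = r` such that every path from `Kg` to the root `K` in the
Schreier graph passes through `Kf`.  (Existence and uniqueness hold whenever
`rad(K) ≥ r`.) -/
def prefCoset {d : ℕ} (K : Subgroup (FreeGroup (Fin d))) (r : ℕ)
    (α : RightCoset K) : FreeGroup (Fin d) :=
  if cosetDist (genSet d) K α ≤ r then
    Classical.epsilon fun f : FreeGroup (Fin d) =>
      flen f = cosetDist (genSet d) K α ∧ rcMk K f = α
  else
    Classical.epsilon fun f : FreeGroup (Fin d) =>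
      flen f = r ∧
      ∀ (m : ℕ) (c : ℕ → RightCoset K), c 0 = α → c m = rcMk K 1 →
        (∀ i < m, ∃ s ∈ genSet d, c (i + 1) = cosetMul K (c i) s) →
        ∃ i ≤ m, c i = rcMk K f

/-- The length-`r` prefix of the reduced word of an element of the free group
(the element itself if `|x| ≤ r`). -/
def prefWord {d : ℕ} (r : ℕ) (x : FreeGroup (Fin d)) : FreeGroup (Fin d) :=
  FreeGroup.mk (x.toWord.take r)

/-- The ball of radius `r` in `G` w.r.t. the generating set `S`. -/
def ball (S : Set G) (r : ℕ) : Set G := {x : G | wordLength S x ≤ r}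

section Lemmas

variable {G : Type*} [Group G]

lemma cosetMul_mk (K : Subgroup G) (a b : G) :
    cosetMul K (rcMk K a) b = rcMk K (a * b) := rfl

lemma cosetMul_mul (K : Subgroup G) (α : RightCoset K) (a b : G) :
    cosetMul K α (a * b) = cosetMul K (cosetMul K α a) b := by
  induction α using Quotient.ind
  simp [cosetMul, rcMk, mul_assoc]

lemma genSet_inv {d : ℕ} {a : FreeGroup (Fin d)} (h : a ∈ genSet d) :
    a⁻¹ ∈ genSet d := by
  obtain ⟨i, h | h⟩ := h
  · exact ⟨i, Or.inr (by rw [h])⟩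
  · exact ⟨i, Or.inl (by rw [h, inv_inv])⟩

lemma exists_word {d : ℕ} (x : FreeGroup (Fin d)) :
    ∃ l : List (FreeGroup (Fin d)), (∀ a ∈ l, a ∈ genSet d) ∧ l.prod = x := by
  induction x using FreeGroup.induction_on with
  | C1 => exact ⟨[], by simp, by simp⟩
  | of i => exact ⟨[FreeGroup.of i], by simp [genSet]; exact ⟨i, Or.inl rfl⟩, by exact (rfl : FreeGroup.of i = pure i) ▸ List.prod_singleton⟩
  | inv_of i ih =>
      exact ⟨[(FreeGroup.of i)⁻¹], by simp [genSet]; exact ⟨i, Or.inr rfl⟩, by exact (rfl : FreeGroup.of i = pure i) ▸ List.prod_singleton⟩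
  | mul x y hx hy =>
      obtain ⟨l, hl, hlp⟩ := hx
      obtain ⟨l', hl', hlp'⟩ := hy
      refine ⟨l ++ l', ?_, by simp [hlp, hlp']⟩
      intro a ha
      rcases List.mem_append.mp ha with h | h
      exacts [hl a h, hl' a h]

lemma flen_spec {d : ℕ} (x : FreeGroup (Fin d)) :
    ∃ l : List (FreeGroup (Fin d)), l.length = flen x ∧ (∀ a ∈ l, a ∈ genSet d) ∧
      l.prod = x := by
  have hne : {n | ∃ l : List (FreeGroup (Fin d)),
      l.length = n ∧ (∀ a ∈ l, a ∈ genSet d) ∧ l.prod = x}.Nonempty := by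
    obtain ⟨l, hl, hlp⟩ := exists_word x
    exact ⟨l.length, l, rfl, hl, hlp⟩
  exact Nat.sInf_mem hne

lemma flen_le {d : ℕ} {x : FreeGroup (Fin d)} {l : List (FreeGroup (Fin d))}
    (hl : ∀ a ∈ l, a ∈ genSet d) (hp : l.prod = x) : flen x ≤ l.length :=
  Nat.sInf_le ⟨l, rfl, hl, hp⟩

lemma flen_inv {d : ℕ} (x : FreeGroup (Fin d)) : flen x⁻¹ = flen x := by
  have key : ∀ y : FreeGroup (Fin d), flen y⁻¹ ≤ flen y := by
    intro y
    obtain ⟨l, hlen, hl, hp⟩ := flen_spec y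
    have : ((l.map fun a => a⁻¹).reverse).prod = y⁻¹ := by
      rw [← hp, ← List.prod_inv_reverse]
    refine le_trans (flen_le ?_ this) (by simp [hlen])
    intro a ha
    simp only [List.mem_reverse, List.mem_map] at ha
    obtain ⟨b, hb, rfl⟩ := ha
    exact genSet_inv (hl b hb)
  refine le_antisymm (key x) ?_
  have := key x⁻¹
  rwa [inv_inv] at this

lemma flen_one {d : ℕ} : flen (1 : FreeGroup (Fin d)) = 0 :=
  Nat.le_zero.mp (flen_le (l := []) (by simp) (by simp))

lemma flen_pos {d : ℕ} {u : FreeGroup (Fin d)} (h : u ≠ 1) : 1 ≤ flen u := by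
  by_contra hc
  push_neg at hc
  interval_cases h' : flen u
  obtain ⟨l, hlen, _, hp⟩ := flen_spec u
  rw [h'] at hlen
  rw [List.length_eq_zero_iff.mp hlen] at hp
  exact h (by simpa using hp.symm)

end Lemmas
section Lemmas2

lemma cosetDist_spec {d : ℕ} (K : Subgroup (FreeGroup (Fin d)))
    (α : RightCoset K) :
    ∃ l : List (FreeGroup (Fin d)), l.length = cosetDist (genSet d) K α ∧
      (∀ a ∈ l, a ∈ genSet d) ∧ rcMk K l.prod = α := by
  obtain ⟨x, hx⟩ := Quotient.exists_rep α
  obtain ⟨l, hl, hp⟩ := exists_word x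
  have hne : {n | ∃ l : List (FreeGroup (Fin d)), l.length = n ∧
      (∀ a ∈ l, a ∈ genSet d) ∧ rcMk K l.prod = α}.Nonempty :=
    ⟨l.length, l, rfl, hl, by rw [hp]; exact hx⟩
  exact Nat.sInf_mem hne

lemma cosetDist_le {d : ℕ} {K : Subgroup (FreeGroup (Fin d))} {α : RightCoset K}
    {l : List (FreeGroup (Fin d))} (hl : ∀ a ∈ l, a ∈ genSet d)
    (hp : rcMk K l.prod = α) : cosetDist (genSet d) K α ≤ l.length := by
  unfold cosetDist
  exact Nat.sInf_le ⟨l, rfl, hl, hp⟩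

lemma cosetDist_le_flen {d : ℕ} (K : Subgroup (FreeGroup (Fin d)))
    (x : FreeGroup (Fin d)) : cosetDist (genSet d) K (rcMk K x) ≤ flen x := by
  obtain ⟨l, hlen, hl, hp⟩ := flen_spec x
  rw [← hlen]
  exact cosetDist_le hl (by rw [hp])

lemma cosetDist_mul_le {d : ℕ} (K : Subgroup (FreeGroup (Fin d)))
    (x w : FreeGroup (Fin d)) :
    cosetDist (genSet d) K (rcMk K (x * w)) ≤
      cosetDist (genSet d) K (rcMk K x) + flen w := by
  obtain ⟨l, hlen, hl, hp⟩ := cosetDist_spec K (rcMk K x)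
  obtain ⟨l', hlen', hl', hp'⟩ := flen_spec w
  have hmk : rcMk K ((l ++ l').prod) = rcMk K (x * w) := by
    rw [List.prod_append, hp']
    have := congrArg (fun β => cosetMul K β w) hp
    simpa [cosetMul_mk] using this
  have := cosetDist_le (l := l ++ l') (fun a ha => by
    rcases List.mem_append.mp ha with h | h
    exacts [hl a h, hl' a h]) hmk
  simpa [hlen, hlen'] using this

lemma cosetDist_mul_ge {d : ℕ} (K : Subgroup (FreeGroup (Fin d)))
    (x w : FreeGroup (Fin d)) :
    cosetDist (genSet d) K (rcMk K x) ≤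
      cosetDist (genSet d) K (rcMk K (x * w)) + flen w := by
  have := cosetDist_mul_le K (x * w) w⁻¹
  simpa [flen_inv] using this

end Lemmas2
section Lemmas3

variable {d : ℕ} (K : Subgroup (FreeGroup (Fin d)))

lemma path_transfer (r : ℕ) (x : FreeGroup (Fin d)) (ww : List (FreeGroup (Fin d)))
    (hw : ∀ a ∈ ww, a ∈ genSet d)
    (hv : ∀ j < ww.length,
      r < cosetDist (genSet d) K (cosetMul K (rcMk K x) ((ww.take j).prod)))
    (f : FreeGroup (Fin d)) (hf : cosetDist (genSet d) K (rcMk K f) ≤ r)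
    (hp : ∀ (m : ℕ) (c : ℕ → RightCoset K), c 0 = rcMk K x → c m = rcMk K 1 →
      (∀ i < m, ∃ s ∈ genSet d, c (i + 1) = cosetMul K (c i) s) →
      ∃ i ≤ m, c i = rcMk K f) :
    ∀ (m : ℕ) (c : ℕ → RightCoset K), c 0 = rcMk K (x * ww.prod) → c m = rcMk K 1 →
      (∀ i < m, ∃ s ∈ genSet d, c (i + 1) = cosetMul K (c i) s) →
      ∃ i ≤ m, c i = rcMk K f := by
  intro M c hc0 hcM hstep
  set L := ww.length with hL
  set c'' : ℕ → RightCoset K := fun i =>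
    if i < L then cosetMul K (rcMk K x) ((ww.take i).prod) else c (i - L) with hcdef
  have hcut : ∀ i ≤ L, c'' i = cosetMul K (rcMk K x) ((ww.take i).prod) := by
    intro i hi
    rcases lt_or_eq_of_le hi with h | h
    · simp [hcdef, h]
    · subst h
      have : ¬ (L < L) := lt_irrefl L
      simp only [hcdef, this, if_false, Nat.sub_self]
      rw [hc0, List.take_length, cosetMul_mk]
  have h0 : c'' 0 = rcMk K x := by
    rw [hcut 0 (Nat.zero_le _)]
    simp [cosetMul_mk]
  have hM : c'' (L + M) = rcMk K 1 := by
    have : ¬ (L + M < L) := by omega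
    simp only [hcdef, this, if_false, Nat.add_sub_cancel_left]
    exact hcM
  have hst : ∀ i < L + M, ∃ s ∈ genSet d, c'' (i + 1) = cosetMul K (c'' i) s := by
    intro i hi
    by_cases h : i < L
    · refine ⟨ww[i], hw _ (List.getElem_mem h), ?_⟩
      rw [hcut i (le_of_lt h), hcut (i + 1) h, ← cosetMul_mul,
        List.prod_take_succ ww i h]
    · push_neg at h
      obtain ⟨s, hs, hcs⟩ := hstep (i - L) (by omega)
      refine ⟨s, hs, ?_⟩
      have h1 : ¬ (i + 1 < L) := by omega
      have h2 : ¬ (i < L) := by omega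
      simp only [hcdef, h1, h2, if_false]
      have : i + 1 - L = (i - L) + 1 := by omega
      rw [this, hcs]
  obtain ⟨i, hiLM, hci⟩ := hp (L + M) c'' h0 hM hst
  by_cases h : i < L
  · exfalso
    have := hv i h
    rw [← hcut i (le_of_lt h), hci] at this
    omega
  · push_neg at h
    refine ⟨i - L, by omega, ?_⟩
    rw [← hci]
    simp only [hcdef, not_lt.mpr h, if_false]

end Lemmas3
section Lemmas4

variable {d : ℕ} (K : Subgroup (FreeGroup (Fin d)))

lemma flen_prod_take {l : List (FreeGroup (Fin d))} (hl : ∀ a ∈ l, a ∈ genSet d)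
    (j : ℕ) : flen ((l.take j).prod) ≤ j := by
  have h1 : flen ((l.take j).prod) ≤ (l.take j).length :=
    flen_le (fun a ha => hl a ((List.take_prefix j l).subset ha)) rfl
  have h2 : (l.take j).length ≤ j := by simp
  omega

lemma pref_stable (r : ℕ) (x u : FreeGroup (Fin d))
    (h : r + flen u < cosetDist (genSet d) K (rcMk K x)) :
    prefCoset K r (rcMk K x) = prefCoset K r (rcMk K (x * u)) := by
  have hged := cosetDist_mul_ge K x u
  have hxu : r < cosetDist (genSet d) K (rcMk K (x * u)) := by omega
  have hx1 : ¬ (cosetDist (genSet d) K (rcMk K x) ≤ r) := by omega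
  have hx2 : ¬ (cosetDist (genSet d) K (rcMk K (x * u)) ≤ r) := by omega
  rw [prefCoset, prefCoset, if_neg hx1, if_neg hx2]
  apply congrArg Classical.epsilon
  funext f
  apply propext
  constructor
  · rintro ⟨hflen, hpaths⟩
    refine ⟨hflen, ?_⟩
    have hfd : cosetDist (genSet d) K (rcMk K f) ≤ r :=
      le_trans (cosetDist_le_flen K f) (le_of_eq hflen)
    obtain ⟨ww, hwlen, hw, hwp⟩ := flen_spec u
    have hv : ∀ j < ww.length,
        r < cosetDist (genSet d) K (cosetMul K (rcMk K x) ((ww.take j).prod)) := by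
      intro j hj
      rw [cosetMul_mk]
      have h1 := cosetDist_mul_ge K x ((ww.take j).prod)
      have h2 : flen ((ww.take j).prod) ≤ j := flen_prod_take hw j
      omega
    have := path_transfer K r x ww hw hv f hfd hpaths
    rwa [hwp] at this
  · rintro ⟨hflen, hpaths⟩
    refine ⟨hflen, ?_⟩
    have hfd : cosetDist (genSet d) K (rcMk K f) ≤ r :=
      le_trans (cosetDist_le_flen K f) (le_of_eq hflen)
    obtain ⟨ww, hwlen, hw, hwp⟩ := flen_spec u⁻¹
    have hwlen' : ww.length = flen u := by rw [hwlen, flen_inv]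
    have hv : ∀ j < ww.length,
        r < cosetDist (genSet d) K
          (cosetMul K (rcMk K (x * u)) ((ww.take j).prod)) := by
      intro j hj
      rw [cosetMul_mk]
      -- x * u * (take j).prod * (drop j).prod = x
      have hsplit : (x * u * (ww.take j).prod) * (ww.drop j).prod = x := by
        rw [mul_assoc, ← List.prod_append, List.take_append_drop, hwp,
          mul_inv_cancel_right]
      have h1 := cosetDist_mul_le K (x * u * (ww.take j).prod) ((ww.drop j).prod)
      rw [hsplit] at h1
      have h2 : flen ((ww.drop j).prod) ≤ ww.length - j := by
        have := flen_le (x := (ww.drop j).prod)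
          (fun a ha => hw a ((List.drop_suffix j ww).subset ha)) rfl
        simpa using this
      omega
    have := path_transfer K r (x * u) ww hw hv f hfd hpaths
    rwa [hwp, mul_inv_cancel_right] at this

end Lemmas4
section Lemmas5
open scoped Classical

lemma genSet_finite (d : ℕ) : (genSet d).Finite := by
  have : genSet d ⊆ Set.range (fun i : Fin d => FreeGroup.of i) ∪
      Set.range (fun i : Fin d => (FreeGroup.of i)⁻¹) := by
    rintro a ⟨i, h | h⟩
    · exact Or.inl ⟨i, h.symm⟩
    · exact Or.inr ⟨i, h.symm⟩
  exact Set.Finite.subset ((Set.finite_range _).union (Set.finite_range _)) this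

lemma ball_finite (d r : ℕ) : (ball (genSet d) r).Finite := by
  have hgs := genSet_finite d
  haveI : Finite ↥(genSet d) := hgs.to_subtype
  have hlists : {l : List ↥(genSet d) | l.length ≤ r}.Finite :=
    List.finite_length_le _ r
  have him : ((fun l : List ↥(genSet d) => (l.map Subtype.val).prod) ''
      {l | l.length ≤ r}).Finite := hlists.image _
  refine him.subset ?_
  intro x hx
  obtain ⟨l, hlen, hl, hp⟩ := flen_spec x
  have hr : l.length ≤ r := by
    rw [hlen]; exact hx
  refine ⟨l.pmap (fun a h => (⟨a, h⟩ : ↥(genSet d))) hl, ?_, ?_⟩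
  · simpa using hr
  · simp [List.map_pmap, hp]

lemma ball_ncard_pos (d r : ℕ) : 0 < (ball (genSet d) r).ncard := by
  rw [Set.ncard_pos (ball_finite d r)]
  exact ⟨1, by simp [ball, show wordLength (genSet d) (1 : FreeGroup (Fin d)) = 0
    from flen_one]⟩

end Lemmas5
open scoped Classical in
/-- **Corollary 4.2.** Let `K ≤ F_d` with `rad(K) ≥ n`, and let `Z_t = K X_t` be the
induced walk on the Schreier graph of `K`.  Then for every `r ≤ n` and `m ≥ 0`,
`∑_{t ≥ m} P[pref_r(Z_t) ≠ pref_r(Z_{t+1})]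
  ≤ |B_r| ⬝ E[ |X_1| ⬝ g_K^{m+}(K, B(K, r + |X_1|)) ]`. -/
theorem prefix_change_bound (d n : ℕ) (hd : 2 ≤ d)
    (K : Subgroup (FreeGroup (Fin d))) (hrad : RadGE K n)
    (μ : PMF (FreeGroup (Fin d))) (hsym : IsSymmetric μ) (hadapted : IsAdapted μ)
    (hmom : FiniteMoment (genSet d) μ 1)
    (r : ℕ) (hr : r ≤ n) (m : ℕ) :
    (∑' (t : ℕ) (x : FreeGroup (Fin d)) (u : FreeGroup (Fin d)),
        (iterConv μ (m + t)) x * μ u *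
          (if prefCoset K r (rcMk K x) ≠ prefCoset K r (rcMk K (x * u))
            then 1 else 0)) ≤
      ((ball (genSet d) r).ncard : ℝ≥0∞) *
        ∑' u : FreeGroup (Fin d), μ u * (flen u : ℝ≥0∞) *
          green μ K m (rcMk K 1) (schreierBall (genSet d) K (r + flen u)) := by
  set T : ℕ → FreeGroup (Fin d) → FreeGroup (Fin d) → ℝ≥0∞ := fun t x u =>
    μ u * (flen u : ℝ≥0∞) *
      (if rcMk K x ∈ schreierBall (genSet d) K (r + flen u)
        then iterConv μ (m + t) x else 0) with hT
  have step1 : (∑' (t : ℕ) (x : FreeGroup (Fin d)) (u : FreeGroup (Fin d)),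
        (iterConv μ (m + t)) x * μ u *
          (if prefCoset K r (rcMk K x) ≠ prefCoset K r (rcMk K (x * u))
            then 1 else 0)) ≤ ∑' (t : ℕ) (x : FreeGroup (Fin d)) (u : FreeGroup (Fin d)), T t x u := by
    refine ENNReal.tsum_le_tsum fun t => ENNReal.tsum_le_tsum fun x =>
      ENNReal.tsum_le_tsum fun u => ?_
    by_cases hind : prefCoset K r (rcMk K x) ≠ prefCoset K r (rcMk K (x * u))
    · have hu1 : u ≠ 1 := by
        rintro rfl
        exact hind (by rw [mul_one])
      have hball : rcMk K x ∈ schreierBall (genSet d) K (r + flen u) := by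
        by_contra hc
        have hc' : r + flen u < cosetDist (genSet d) K (rcMk K x) := by
          simpa [schreierBall, not_le] using hc
        exact hind (pref_stable K r x u hc')
      have hfl : (1 : ℝ≥0∞) ≤ (flen u : ℝ≥0∞) := by
        exact_mod_cast flen_pos hu1
      rw [hT]
      simp only [if_pos hind, if_pos hball, mul_one]
      calc iterConv μ (m + t) x * μ u = μ u * 1 * iterConv μ (m + t) x := by ring
        _ ≤ μ u * (flen u : ℝ≥0∞) * iterConv μ (m + t) x := by
            gcongr
    · simp [hind]
  have step2 : (∑' (t : ℕ) (x : FreeGroup (Fin d)) (u : FreeGroup (Fin d)), T t x u) =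
      ∑' u : FreeGroup (Fin d), μ u * (flen u : ℝ≥0∞) *
        green μ K m (rcMk K 1) (schreierBall (genSet d) K (r + flen u)) := by
    have swap : (∑' (t : ℕ) (x : FreeGroup (Fin d)) (u : FreeGroup (Fin d)), T t x u) =
        ∑' (u : FreeGroup (Fin d)) (t : ℕ) (x : FreeGroup (Fin d)), T t x u := by
      calc (∑' (t : ℕ) (x : FreeGroup (Fin d)) (u : FreeGroup (Fin d)), T t x u)
          = ∑' (t : ℕ) (u : FreeGroup (Fin d)) (x : FreeGroup (Fin d)), T t x u :=
            tsum_congr fun t => ENNReal.tsum_comm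
        _ = ∑' (u : FreeGroup (Fin d)) (t : ℕ) (x : FreeGroup (Fin d)), T t x u :=
            ENNReal.tsum_comm
    rw [swap]
    refine tsum_congr fun u => ?_
    have pull : (∑' (t : ℕ) (x : FreeGroup (Fin d)), T t x u) =
        μ u * (flen u : ℝ≥0∞) * ∑' (t : ℕ) (x : FreeGroup (Fin d)),
          (if rcMk K x ∈ schreierBall (genSet d) K (r + flen u)
            then iterConv μ (m + t) x else 0) := by
      rw [← ENNReal.tsum_mul_left]
      refine tsum_congr fun t => ?_
      rw [← ENNReal.tsum_mul_left]
    rw [pull]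
    congr 1
    rw [green]
    refine tsum_congr fun t => tsum_congr fun x => ?_
    congr 1
    simp [cosetMul_mk, schreierBall]
  rw [step2] at step1
  refine le_trans step1 ?_
  refine le_mul_of_one_le_left zero_le ?_
  exact_mod_cast Nat.one_le_cast.mpr (ball_ncard_pos d r)

end Paper
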